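/- Define recursively: X₀ = a one-point set with operation x ⋆₀ y = y and s₀ = identity; and for m ≥ 0, X_{m+1} = X_m ⊔ X_m (binary sum) with s_{m+1} = the swap of the two summands, and operation ⋆_{m+1} given by inl a ⋆ inl b = inl(a ⋆_m b), inr a ⋆ inr b = inr(a ⋆_m b), inl a ⋆ inr b = inr(s_m(b)), inr a ⋆ inl b = inl(s_m(b)). Further define q_{m+1} : X_{m+1} → X_m by: q₁ is the constant map X₁ → X₀, and for m ≥ 1, q_{m+1}(inl a) = inl(q_m(a)) and q_{m+1}(inr a) = inr(q_m(a)). Then for every m: (1) ⋆_m is a nondegenerate cycle set operation on X_m (a set of size 2^m); (2) for all x, y ∈ X_{m+1}, the left translations satisfy ψ_x = ψ_y if and only if q_{m+1}(x) = q_{m+1}(y); and (3) q_{m+1}(x ⋆_{m+1} y) = q_{m+1}(x) ⋆_m q_{m+1}(y) for all x, y ∈ X_{m+1}. Hence the retraction of X_{m+1} is isomorphic to X_m, and X_{m+1} is a multipermutation solution of level m+1. -/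

import Mathlib

def IsCycleSet {X : Type*} (op : X → X → X) : Prop :=
  (∀ x, Function.Bijective fun y => op x y) ∧
  ∀ x y z, op (op x y) (op x z) = op (op y x) (op y z)

def IsNondegenerate {X : Type*} (op : X → X → X) : Prop :=
  Function.Bijective fun x => op x x

/-- `Xseq m` is the underlying set of the level-`m` multipermutation solution:
a binary tree of depth `m`, of size `2^m`. -/
def Xseq : ℕ → Type
  | 0 => PUnit
  | m + 1 => Xseq m ⊕ Xseq m

/-- The swap `s_m` of the two summands of `Xseq m` (the identity for `m = 0`). -/
def sswap : (m : ℕ) → Xseq m → Xseq m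
  | 0, x => x
  | _ + 1, Sum.inl a => Sum.inr a
  | _ + 1, Sum.inr a => Sum.inl a

/-- The recursively defined cycle set operation `⋆_m` on `Xseq m`. -/
def opm : (m : ℕ) → Xseq m → Xseq m → Xseq m
  | 0, _, y => y
  | m + 1, Sum.inl a, Sum.inl b => Sum.inl (opm m a b)
  | m + 1, Sum.inr a, Sum.inr b => Sum.inr (opm m a b)
  | m + 1, Sum.inl _, Sum.inr b => Sum.inr (sswap m b)
  | m + 1, Sum.inr _, Sum.inl b => Sum.inl (sswap m b)

/-- The retraction map `q_{m+1} : Xseq (m+1) → Xseq m`. -/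
def qm : (m : ℕ) → Xseq (m + 1) → Xseq m
  | 0, _ => PUnit.unit
  | m + 1, Sum.inl a => Sum.inl (qm m a)
  | m + 1, Sum.inr a => Sum.inr (qm m a)

def xdef : (m : ℕ) → Xseq m
  | 0 => PUnit.unit
  | m + 1 => Sum.inl (xdef m)

lemma sswap_invol : ∀ (m : ℕ) (x : Xseq m), sswap m (sswap m x) = x
  | 0, _ => rfl
  | _ + 1, Sum.inl _ => rfl
  | _ + 1, Sum.inr _ => rfl

lemma sswap_bij (m : ℕ) : Function.Bijective (sswap m) :=
  Function.Involutive.bijective (sswap_invol m)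

lemma sswap_hom : ∀ (m : ℕ) (a b : Xseq m),
    sswap m (opm m a b) = opm m (sswap m a) (sswap m b)
  | 0, _, _ => rfl
  | _ + 1, Sum.inl _, Sum.inl _ => rfl
  | _ + 1, Sum.inl _, Sum.inr _ => rfl
  | _ + 1, Sum.inr _, Sum.inl _ => rfl
  | _ + 1, Sum.inr _, Sum.inr _ => rfl

lemma qm_sswap : ∀ (m : ℕ) (x : Xseq (m + 1)),
    qm m (sswap (m + 1) x) = sswap m (qm m x)
  | 0, _ => rfl
  | _ + 1, Sum.inl _ => rfl
  | _ + 1, Sum.inr _ => rfl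

lemma opm_inl (m : ℕ) (a : Xseq m) :
    (fun y => opm (m + 1) (Sum.inl a) y) = Sum.map (opm m a) (sswap m) :=
  funext fun y => by cases y <;> rfl

lemma opm_inr (m : ℕ) (a : Xseq m) :
    (fun y => opm (m + 1) (Sum.inr a) y) = Sum.map (sswap m) (opm m a) :=
  funext fun y => by cases y <;> rfl

lemma sq_succ (m : ℕ) :
    (fun x : Xseq (m + 1) => opm (m + 1) x x) =
      Sum.map (fun a => opm m a a) (fun a => opm m a a) :=
  funext fun x => by cases x <;> rfl

lemma psi_ne_sswap (m : ℕ) (a : Xseq (m + 1))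
    (h : ∀ z, opm (m + 1) a z = sswap (m + 1) z) : False := by
  have := h (Sum.inl (xdef m))
  cases a <;> simp [opm, sswap] at this


/-- For every `m`: `⋆_m` is a nondegenerate cycle set operation on a set of
size `2^m`; two elements of `Xseq (m+1)` have equal left translations iff they
have the same image under `q_{m+1}`; and `q_{m+1}` is a homomorphism of cycle
sets. Hence `Ret(Xseq (m+1)) ≅ Xseq m` and `Xseq (m+1)` is a multipermutation
solution of level `m+1`. -/
theorem multipermutation_tower (m : ℕ) :
    (IsCycleSet (opm m) ∧ IsNondegenerate (opm m) ∧
      Nonempty (Xseq m ≃ Fin (2 ^ m))) ∧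
    (∀ x y : Xseq (m + 1),
      (∀ z, opm (m + 1) x z = opm (m + 1) y z) ↔ qm m x = qm m y) ∧
    (∀ x y : Xseq (m + 1),
      qm m (opm (m + 1) x y) = opm m (qm m x) (qm m y)) := by
  induction m with
  | zero =>
    haveI : Unique (Xseq 0) := ⟨⟨PUnit.unit⟩, fun _ => rfl⟩
    haveI : Unique (Fin (2 ^ 0)) := ⟨⟨0⟩, fun x => by omega⟩
    refine ⟨⟨⟨fun x => Function.bijective_id, fun x y z => rfl⟩,
      Function.bijective_id, ⟨Equiv.ofUnique (Xseq 0) (Fin (2 ^ 0))⟩⟩, ?_, ?_⟩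
    · intro x y
      exact ⟨fun _ => rfl, fun _ z => by cases x <;> cases y <;> cases z <;> rfl⟩
    · intro x y; rfl
  | succ m ih =>
    obtain ⟨⟨hbij, hcyc⟩, hnd, ⟨e⟩⟩ := ih.1
    have hpsi := ih.2.1
    refine ⟨⟨⟨?_, ?_⟩, ?_, ?_⟩, ?_, ?_⟩
    · -- bijective left translations
      rintro (a | a)
      · rw [opm_inl]; exact (hbij a).sumMap (sswap_bij m)
      · rw [opm_inr]; exact (sswap_bij m).sumMap (hbij a)
    · -- cycle set identity
      rintro (a | a) (b | b) (c | c) <;>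
        simp [opm, sswap_hom, sswap_invol, hcyc _ _ _] <;> rfl
    · -- nondegeneracy
      rw [IsNondegenerate, sq_succ]; exact hnd.sumMap hnd
    · -- cardinality
      exact ⟨(Equiv.sumCongr e e).trans <| finSumFinEquiv.trans <|
        finCongr (by rw [pow_succ, mul_two])⟩
    · -- retraction characterization
      rintro (a | a) (b | b)
      · constructor
        · intro h
          have : ∀ w, opm (m + 1) a w = opm (m + 1) b w := by
            intro w
            have := h (Sum.inl w)
            exact Sum.inl.inj this
          exact congrArg Sum.inl ((hpsi a b).1 this)
        · intro h
          have hab : ∀ w, opm (m + 1) a w = opm (m + 1) b w :=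
            (hpsi a b).2 (by simpa [qm, Xseq] using h)
          rintro (w | w)
          · exact congrArg Sum.inl (hab w)
          · rfl
      · constructor
        · intro h
          exact absurd (fun z => Sum.inl.inj (h (Sum.inl z)))
            (fun hz => psi_ne_sswap m a hz)
        · intro h; simp [qm] at h
      · constructor
        · intro h
          exact absurd (fun z => Sum.inl.inj (h (Sum.inl z)).symm)
            (fun hz => psi_ne_sswap m b hz)
        · intro h; simp [qm] at h
      · constructor
        · intro h
          have : ∀ w, opm (m + 1) a w = opm (m + 1) b w := by
            intro w
            have := h (Sum.inr w)
            exact Sum.inr.inj this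
          exact congrArg Sum.inr ((hpsi a b).1 this)
        · intro h
          have hab : ∀ w, opm (m + 1) a w = opm (m + 1) b w :=
            (hpsi a b).2 (by simpa [qm, Xseq] using h)
          rintro (w | w)
          · rfl
          · exact congrArg Sum.inr (hab w)
    · -- q is a homomorphism
      rintro (a | a) (b | b) <;> simp [opm, qm, ih.2.2, qm_sswap] <;> rfl
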